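/- (Toft) For even n ≥ 4, m(n) ≤ 2^{n-1} + C(n, n/2)/2 + n · m(n-2), where C(n,k) denotes the binomial coefficient. -/

import Mathlib

open Finset

/-- A family of finsets is `n`-uniform if every hyperedge has `n` elements. -/
def IsUniform (n : ℕ) (E : Finset (Finset ℕ)) : Prop := ∀ e ∈ E, e.card = n

/-- A hypergraph (family of hyperedges) is 2-colorable if there is a Red/Blue
coloring of the vertices such that no hyperedge is monochromatic. -/
def Colorable2 (E : Finset (Finset ℕ)) : Prop :=
  ∃ χ : ℕ → Bool, ∀ e ∈ E, (∃ v ∈ e, χ v = true) ∧ (∃ v ∈ e, χ v = false)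

/-- `m n` is the least number of hyperedges in a non-2-colorable `n`-uniform hypergraph. -/
noncomputable def m (n : ℕ) : ℕ :=
  sInf {k | ∃ E : Finset (Finset ℕ), IsUniform n E ∧ ¬ Colorable2 E ∧ E.card = k}

/-- A hyperedge is monochromatic under `χ` if all its vertices get the same color. -/
def Mono (χ : ℕ → Bool) (s : Finset ℕ) : Prop :=
  (∀ x ∈ s, χ x = true) ∨ (∀ x ∈ s, χ x = false)


def oddE (n : ℕ) (K : Finset ℕ) : Finset ℕ := K ∪ (range n \ K).image (· + n)
def evenE (n : ℕ) (K : Finset ℕ) : Finset ℕ := K.image (· + n) ∪ (range n \ K)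
def kEdge (n : ℕ) (K : Finset ℕ) : Finset ℕ := if Odd K.card then oddE n K else evenE n K
def kEdges (n : ℕ) : Finset (Finset ℕ) :=
  ((range n).powerset.filter (fun K => K.card ≤ n/2)).image (kEdge n)

lemma oddE_card {n : ℕ} {K : Finset ℕ} (hK : K ⊆ range n) : (oddE n K).card = n := by
  have hd : Disjoint K ((range n \ K).image (· + n)) := by
    rw [Finset.disjoint_left]
    intro x hx hx'
    have h1 : x < n := mem_range.mp (hK hx)
    obtain ⟨y, hy, rfl⟩ := mem_image.mp hx'
    omega
  have hcK : K.card ≤ n := by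
    simpa using card_le_card hK
  rw [oddE, card_union_of_disjoint hd, card_image_of_injective _ (add_left_injective n),
    card_sdiff_of_subset hK, card_range]
  omega

lemma evenE_card {n : ℕ} {K : Finset ℕ} (hK : K ⊆ range n) : (evenE n K).card = n := by
  have hd : Disjoint (K.image (· + n)) (range n \ K) := by
    rw [Finset.disjoint_left]
    intro x hx hx'
    obtain ⟨y, hy, rfl⟩ := mem_image.mp hx
    have := mem_range.mp (mem_sdiff.mp hx').1
    omega
  have hcK : K.card ≤ n := by simpa using card_le_card hK
  rw [evenE, card_union_of_disjoint hd, card_image_of_injective _ (add_left_injective n),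
    card_sdiff_of_subset hK, card_range]
  omega

lemma kEdge_card {n : ℕ} {K : Finset ℕ} (hK : K ⊆ range n) : (kEdge n K).card = n := by
  rw [kEdge]; split
  · exact oddE_card hK
  · exact evenE_card hK

lemma kEdge_mem {n : ℕ} {K : Finset ℕ} (hK : K ⊆ range n) (hc : K.card ≤ n/2) :
    kEdge n K ∈ kEdges n := by
  apply mem_image_of_mem
  simp [mem_filter, mem_powerset, hK, hc]

lemma kEdges_uniform {n : ℕ} : ∀ e ∈ kEdges n, e.card = n := by
  intro e he
  obtain ⟨K, hK, rfl⟩ := mem_image.mp he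
  rw [mem_filter, mem_powerset] at hK
  exact kEdge_card hK.1

/- cardinality of the K-edge family -/
lemma filter_card_eq (n : ℕ) :
    ((range n).powerset.filter (fun K => K.card ≤ n/2)).card
      = ∑ k ∈ range (n/2+1), n.choose k := by
  have he : (range n).powerset.filter (fun K => K.card ≤ n/2)
      = (range (n/2+1)).biUnion (fun j => powersetCard j (range n)) := by
    ext A
    simp only [mem_filter, mem_powerset, mem_biUnion, mem_range, mem_powersetCard,
      Nat.lt_succ_iff]
    constructor
    · rintro ⟨h1, h2⟩; exact ⟨A.card, h2, h1, rfl⟩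
    · rintro ⟨j, hj, h1, rfl⟩; exact ⟨h1, hj⟩
  rw [he, card_biUnion]
  · refine Finset.sum_congr rfl fun j _ => by rw [card_powersetCard, card_range]
  · intro i _ j _ hij
    rw [Function.onFun, Finset.disjoint_left]
    intro A hA hA'
    rw [mem_powersetCard] at hA hA'
    exact hij (hA.2 ▸ hA'.2 ▸ rfl)

lemma choose_half_even {h : ℕ} (hh : 1 ≤ h) :
    (2*h).choose h = 2 * (2*h-1).choose (h-1) := by
  obtain ⟨h', rfl⟩ := Nat.exists_eq_add_of_le hh
  have e1 : 2*(1+h') = (2*h'+1)+1 := by ring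
  have e2 : 1+h' = h'+1 := by ring
  rw [e1, e2, Nat.choose_succ_succ]
  have h3 : (2*h'+1).choose (h'+1) = (2*h'+1).choose h' := by
    rw [← Nat.choose_symm (show h'+1 ≤ 2*h'+1 by omega)]
    congr 1
    omega
  rw [h3]
  norm_num
  rw [← two_mul]

lemma sum_half (h : ℕ) (hh : 1 ≤ h) :
    ∑ k ∈ range (h+1), (2*h).choose k = 2^(2*h-1) + (2*h-1).choose (h-1) := by
  have key : 2 * ∑ k ∈ range (h+1), (2*h).choose k = 2^(2*h) + (2*h).choose h := by
    have split : ∑ k ∈ range (2*h+1), (2*h).choose k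
        = ∑ k ∈ range (h+1), (2*h).choose k + ∑ k ∈ Ico (h+1) (2*h+1), (2*h).choose k := by
      rw [range_eq_Ico, ← Finset.sum_Ico_consecutive _ (by omega : 0 ≤ h+1) (by omega : h+1 ≤ 2*h+1), ← range_eq_Ico]
    have refl1 : ∑ k ∈ Ico (h+1) (2*h+1), (2*h).choose k = ∑ k ∈ range h, (2*h).choose k := by
      rw [Finset.sum_Ico_eq_sum_range]
      have e5 : 2*h+1 - (h+1) = h := by omega
      rw [e5, ← Finset.sum_range_reflect (fun j => (2*h).choose (h + 1 + j)) h]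
      refine Finset.sum_congr rfl fun j hj => ?_
      have hj' : j < h := mem_range.mp hj
      have : h + 1 + (h - 1 - j) = 2*h - j := by omega
      rw [this, Nat.choose_symm (by omega)]
    have total : ∑ k ∈ range (2*h+1), (2*h).choose k = 2^(2*h) := Nat.sum_range_choose (2*h)
    have last : ∑ k ∈ range (h+1), (2*h).choose k = ∑ k ∈ range h, (2*h).choose k + (2*h).choose h :=
      Finset.sum_range_succ _ h
    omega
  have hch := choose_half_even hh
  have hp : 2^(2*h) = 2 * 2^(2*h-1) := by
    rw [← pow_succ']
    congr 1
    omega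
  omega

/- pair edges -/
def pairEdges (n : ℕ) (E₀ : Finset (Finset ℕ)) : Finset (Finset ℕ) :=
  (E₀ ×ˢ range n).image (fun p => p.1.image (· + 2*n) ∪ {p.2, p.2 + n})

lemma pairEdge_card {n : ℕ} (hn : 4 ≤ n) {e : Finset ℕ} (hc : e.card = n - 2) {i : ℕ}
    (hi : i < n) : (e.image (· + 2*n) ∪ {i, i + n}).card = n := by
  have hd : Disjoint (e.image (· + 2*n)) ({i, i + n} : Finset ℕ) := by
    rw [Finset.disjoint_left]
    intro x hx hx'
    obtain ⟨y, hy, rfl⟩ := mem_image.mp hx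
    simp only [mem_insert, mem_singleton] at hx'
    omega
  rw [card_union_of_disjoint hd, card_image_of_injective _ (add_left_injective (2*n)), hc]
  have : ({i, i+n} : Finset ℕ).card = 2 := by
    rw [card_insert_of_notMem (by simp; omega), card_singleton]
  omega

lemma pairEdges_uniform {n : ℕ} (hn : 4 ≤ n) {E₀ : Finset (Finset ℕ)}
    (hu : IsUniform (n-2) E₀) : ∀ e ∈ pairEdges n E₀, e.card = n := by
  intro e he
  obtain ⟨⟨e₀, i⟩, hp, rfl⟩ := mem_image.mp he
  rw [mem_product] at hp
  exact pairEdge_card hn (hu e₀ hp.1) (mem_range.mp hp.2)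

lemma mainlem {h : ℕ} (hh : 1 ≤ h) (χ : ℕ → Bool)
    (hB : ∀ i < 2*h, χ i = true ∨ χ (i + 2*h) = true) :
    ∃ e ∈ kEdges (2*h), Mono χ e := by
  set n := 2*h with hn
  have hn2 : n/2 = h := by omega
  set Tu := (range n).filter (fun i => χ i = true) with hTu
  set Sv := (range n).filter (fun i => χ (i+n) = false) with hSv
  have hTur : Tu ⊆ range n := filter_subset _ _
  have hSvTu : Sv ⊆ Tu := by
    intro i hi
    rw [hSv, mem_filter] at hi
    rw [hTu, mem_filter]
    refine ⟨hi.1, ?_⟩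
    rcases hB i (mem_range.mp hi.1) with h1 | h1
    · exact h1
    · rw [hi.2] at h1; exact absurd h1 (by simp)
  by_cases hA : ∃ i ∈ range n, χ i = true ∧ χ (i+n) = true
  · obtain ⟨i, hir, hit, hivt⟩ := hA
    have hiTu : i ∈ Tu := by rw [hTu, mem_filter]; exact ⟨hir, hit⟩
    have hiSv : i ∉ Sv := by rw [hSv, mem_filter]; simp [hivt]
    have hlt : Sv.card < Tu.card :=
      card_lt_card ((Finset.ssubset_iff_of_subset hSvTu).mpr ⟨i, hiTu, hiSv⟩)
    by_cases hah : Sv.card < h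
    · -- odd edge, all true
      set j := if Odd Sv.card then 0 else 1 with hj
      have hj1 : j ≤ 1 := by rw [hj]; split <;> omega
      have hjodd : Odd (j + Sv.card) := by
        rw [hj]; split
        · simpa using ‹Odd Sv.card›
        · rcases Nat.even_or_odd Sv.card with he | ho
          · rw [Nat.add_comm]; exact he.add_one
          · exact absurd ho ‹¬ Odd Sv.card›
      obtain ⟨K, hSvK, hKTu, hKc⟩ := Finset.exists_subsuperset_card_eq (n := j + Sv.card) hSvTu (by omega) (by omega)
      have hKr : K ⊆ range n := hKTu.trans hTur
      have hKodd : Odd K.card := by rw [hKc]; exact hjodd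
      refine ⟨kEdge n K, kEdge_mem hKr (by omega), Or.inl ?_⟩
      rw [kEdge, if_pos hKodd]
      intro x hx
      rw [oddE, mem_union] at hx
      rcases hx with hx | hx
      · have := hKTu hx
        rw [hTu, mem_filter] at this
        exact this.2
      · obtain ⟨y, hy, rfl⟩ := mem_image.mp hx
        rw [mem_sdiff] at hy
        have hyS : y ∉ Sv := fun hc => hy.2 (hSvK hc)
        rw [hSv, mem_filter] at hyS
        push_neg at hyS
        have := hyS hy.1
        simp only [Bool.not_eq_false] at this
        exact this
    · -- even edge, all true
      set Cu := (range n).filter (fun i => χ i = false) with hCu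
      set Tv := (range n).filter (fun i => χ (i+n) = true) with hTv
      have hCuTv : Cu ⊆ Tv := by
        intro i hi
        rw [hCu, mem_filter] at hi
        rw [hTv, mem_filter]
        refine ⟨hi.1, ?_⟩
        rcases hB i (mem_range.mp hi.1) with h1 | h1
        · rw [hi.2] at h1; exact absurd h1 (by simp)
        · exact h1
      have hTuCu : Tu.card + Cu.card = n := by
        have h1 := Finset.card_filter_add_card_filter_not
          (s := range n) (p := fun i => χ i = true)
        rw [card_range] at h1
        have h2 : (range n).filter (fun i => ¬ (χ i = true)) = Cu :=
          filter_congr (fun i _ => by simp)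
        rw [h2] at h1
        exact h1
      have hSvTv : Sv.card + Tv.card = n := by
        have h1 := Finset.card_filter_add_card_filter_not
          (s := range n) (p := fun i => χ (i+n) = true)
        rw [card_range] at h1
        have h2 : (range n).filter (fun i => ¬ (χ (i+n) = true)) = Sv :=
          filter_congr (fun i _ => by simp)
        rw [h2] at h1
        rw [hTv, Nat.add_comm]
        exact h1
      set j := if Even Cu.card then 0 else 1 with hj
      have hj1 : j ≤ 1 := by rw [hj]; split <;> omega
      have hjeven : Even (j + Cu.card) := by
        rw [hj]; split
        · simpa using ‹Even Cu.card›
        · rcases Nat.even_or_odd Cu.card with he | ho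
          · exact absurd he ‹¬ Even Cu.card›
          · rw [Nat.add_comm]; exact ho.add_one
      obtain ⟨K, hCuK, hKTv, hKc⟩ := Finset.exists_subsuperset_card_eq (n := j + Cu.card) hCuTv (by omega) (by omega)
      have hKr : K ⊆ range n := hKTv.trans (filter_subset _ _)
      have hKev : ¬ Odd K.card := by rw [hKc, Nat.not_odd_iff_even]; exact hjeven
      refine ⟨kEdge n K, kEdge_mem hKr (by omega), Or.inl ?_⟩
      rw [kEdge, if_neg hKev]
      intro x hx
      rw [evenE, mem_union] at hx
      rcases hx with hx | hx
      · obtain ⟨y, hy, rfl⟩ := mem_image.mp hx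
        have := hKTv hy
        rw [hTv, mem_filter] at this
        exact this.2
      · rw [mem_sdiff] at hx
        have hxC : x ∉ Cu := fun hc => hx.2 (hCuK hc)
        rw [hCu, mem_filter] at hxC
        push_neg at hxC
        have := hxC hx.1
        simp only [Bool.not_eq_false] at this
        exact this
  · -- all pairs differ
    push_neg at hA
    have hdiff : ∀ i ∈ range n, χ (i+n) = !(χ i) := by
      intro i hi
      cases hci : χ i with
      | false =>
        rcases hB i (mem_range.mp hi) with h1 | h1
        · rw [hci] at h1; exact absurd h1 (by simp)
        · rw [h1]; rfl
      | true =>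
        have h2 := hA i hi hci
        simp only [Bool.not_true]
        exact Bool.eq_false_iff.mpr h2
    by_cases ht : Tu.card ≤ h
    · refine ⟨kEdge n Tu, kEdge_mem hTur (by omega), ?_⟩
      by_cases hodd : Odd Tu.card
      · refine Or.inl ?_
        rw [kEdge, if_pos hodd]
        intro x hx
        rw [oddE, mem_union] at hx
        rcases hx with hx | hx
        · rw [hTu, mem_filter] at hx; exact hx.2
        · obtain ⟨y, hy, rfl⟩ := mem_image.mp hx
          rw [mem_sdiff] at hy
          have hyf : χ y = false := by
            have : ¬ (χ y = true) := fun hc => hy.2 (by rw [hTu, mem_filter]; exact ⟨hy.1, hc⟩)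
            simpa using this
          rw [hdiff y hy.1, hyf]
          rfl
      · refine Or.inr ?_
        rw [kEdge, if_neg hodd]
        intro x hx
        rw [evenE, mem_union] at hx
        rcases hx with hx | hx
        · obtain ⟨y, hy, rfl⟩ := mem_image.mp hx
          have hyt : χ y = true := by rw [hTu, mem_filter] at hy; exact hy.2
          rw [hdiff y (hTur hy), hyt]
          rfl
        · rw [mem_sdiff] at hx
          have : ¬ (χ x = true) := fun hc => hx.2 (by rw [hTu, mem_filter]; exact ⟨hx.1, hc⟩)
          simpa using this
    · set K := range n \ Tu with hK
      have hKr : K ⊆ range n := sdiff_subset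
      have hKcard : K.card = n - Tu.card := by rw [hK, card_sdiff_of_subset hTur, card_range]
      have hTuc : Tu.card ≤ n := by simpa using card_le_card hTur
      have hcompl : range n \ K = Tu := by
        rw [hK, sdiff_sdiff_right_self]
        exact inf_eq_right.mpr hTur
      rcases Nat.even_or_odd Tu.card with hev | hod
      · -- t even, even edge, all true
        have hKev : ¬ Odd K.card := by
          rw [hKcard, Nat.not_odd_iff_even]
          exact (Nat.even_sub hTuc).mpr (iff_of_true ⟨h, by omega⟩ hev)
        refine ⟨kEdge n K, kEdge_mem hKr (by omega), Or.inl ?_⟩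
        rw [kEdge, if_neg hKev]
        intro x hx
        rw [evenE, mem_union] at hx
        rcases hx with hx | hx
        · obtain ⟨y, hy, rfl⟩ := mem_image.mp hx
          rw [hK, mem_sdiff] at hy
          have hyf : χ y = false := by
            have : ¬ (χ y = true) := fun hc => hy.2 (by rw [hTu, mem_filter]; exact ⟨hy.1, hc⟩)
            simpa using this
          rw [hdiff y hy.1, hyf]
          rfl
        · rw [hcompl] at hx
          rw [hTu, mem_filter] at hx
          exact hx.2
      · -- t odd, odd edge, all false
        have hKodd : Odd K.card := by
          rw [hKcard]
          exact Nat.Even.sub_odd hTuc ⟨h, by omega⟩ hod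
        refine ⟨kEdge n K, kEdge_mem hKr (by omega), Or.inr ?_⟩
        rw [kEdge, if_pos hKodd]
        intro x hx
        rw [oddE, mem_union] at hx
        rcases hx with hx | hx
        · rw [hK, mem_sdiff] at hx
          have : ¬ (χ x = true) := fun hc => hx.2 (by rw [hTu, mem_filter]; exact ⟨hx.1, hc⟩)
          simpa using this
        · rw [hcompl] at hx
          obtain ⟨y, hy, rfl⟩ := mem_image.mp hx
          have hyt : χ y = true := by rw [hTu, mem_filter] at hy; exact hy.2
          rw [hdiff y (hTur hy), hyt]
          rfl

lemma exists_noncol (k : ℕ) (hk : 1 ≤ k) :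
    ∃ E : Finset (Finset ℕ), IsUniform k E ∧ ¬ Colorable2 E := by
  refine ⟨powersetCard k (range (2*k-1)), ?_, ?_⟩
  · intro e he
    exact (mem_powersetCard.mp he).2
  · rintro ⟨χ, hχ⟩
    set T := (range (2*k-1)).filter (fun i => χ i = true) with hT
    set F := (range (2*k-1)).filter (fun i => χ i = false) with hF
    have hTF : T.card + F.card = 2*k-1 := by
      have h1 := Finset.card_filter_add_card_filter_not
        (s := range (2*k-1)) (p := fun i => χ i = true)
      rw [card_range] at h1
      have h2 : (range (2*k-1)).filter (fun i => ¬ (χ i = true)) = F :=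
        filter_congr (fun i _ => by simp)
      rw [h2] at h1
      exact h1
    rcases le_or_gt k T.card with hc | hc
    · obtain ⟨s, hs, hsc⟩ := Finset.exists_subset_card_eq hc
      have hmem : s ∈ powersetCard k (range (2*k-1)) :=
        mem_powersetCard.mpr ⟨hs.trans (filter_subset _ _), hsc⟩
      obtain ⟨v, hv, hvf⟩ := (hχ s hmem).2
      have := hs hv
      rw [hT, mem_filter] at this
      rw [this.2] at hvf
      exact absurd hvf (by simp)
    · have hcF : k ≤ F.card := by omega
      obtain ⟨s, hs, hsc⟩ := Finset.exists_subset_card_eq hcF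
      have hmem : s ∈ powersetCard k (range (2*k-1)) :=
        mem_powersetCard.mpr ⟨hs.trans (filter_subset _ _), hsc⟩
      obtain ⟨v, hv, hvt⟩ := (hχ s hmem).1
      have := hs hv
      rw [hF, mem_filter] at this
      rw [this.2] at hvt
      exact absurd hvt (by simp)

/-- Toft: for even `n ≥ 4`, `m n ≤ 2 ^ (n - 1) + (n choose n/2) / 2 + n * m (n - 2)`. -/
theorem toft_recurrence (n : ℕ) (hn : 4 ≤ n) (heven : Even n) :
    m n ≤ 2 ^ (n - 1) + Nat.choose n (n / 2) / 2 + n * m (n - 2) := by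
  obtain ⟨h, rfl⟩ := heven
  have hh2 : 2 ≤ h := by omega
  have hh1 : 1 ≤ h := by omega
  have hE : h + h = 2 * h := by ring
  rw [hE]
  have hne : {k | ∃ E : Finset (Finset ℕ),
      IsUniform (2*h-2) E ∧ ¬ Colorable2 E ∧ E.card = k}.Nonempty := by
    obtain ⟨E, hu, hnc⟩ := exists_noncol (2*h-2) (by omega)
    exact ⟨E.card, E, hu, hnc, rfl⟩
  obtain ⟨E₀, hE₀u, hE₀nc, hE₀card⟩ := Nat.sInf_mem hne
  set Etot := kEdges (2*h) ∪ pairEdges (2*h) E₀ with hEtot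
  have huni : IsUniform (2*h) Etot := by
    intro e he
    rcases mem_union.mp he with he | he
    · exact kEdges_uniform e he
    · exact pairEdges_uniform (by omega) hE₀u e he
  have hncol : ¬ Colorable2 Etot := by
    rintro ⟨χ, hχ⟩
    have hkE : ∀ e ∈ kEdges (2*h), ¬ Mono χ e := by
      intro e he hm
      obtain ⟨⟨v1, hv1, hvt⟩, ⟨v2, hv2, hvf⟩⟩ := hχ e (mem_union_left _ he)
      rcases hm with hm | hm
      · rw [hm v2 hv2] at hvf; exact absurd hvf (by simp)
      · rw [hm v1 hv1] at hvt; exact absurd hvt (by simp)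
    by_cases hA : ∃ i ∈ range (2*h), χ i = true ∧ χ (i + 2*h) = true
    · by_cases hBk : ∃ i ∈ range (2*h), χ i = false ∧ χ (i + 2*h) = false
      · obtain ⟨i, hir, hit, hivt⟩ := hA
        obtain ⟨j, hjr, hjf, hjvf⟩ := hBk
        have hone : ∃ e ∈ E₀, ¬((∃ v ∈ e, χ (v + 2*(2*h)) = true) ∧
            (∃ v ∈ e, χ (v + 2*(2*h)) = false)) := by
          by_contra hcon
          push_neg at hcon
          exact hE₀nc ⟨fun x => χ (x + 2*(2*h)), hcon⟩
        obtain ⟨e, he, hbad⟩ := hone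
        rcases not_and_or.mp hbad with hP | hQ
        · have hpj : ((e, j) : Finset ℕ × ℕ) ∈ E₀ ×ˢ range (2*h) :=
            mem_product.mpr ⟨he, hjr⟩
          have hedge : e.image (· + 2*(2*h)) ∪ {j, j + 2*h} ∈ pairEdges (2*h) E₀ :=
            mem_image_of_mem _ hpj
          obtain ⟨v, hv, hvt⟩ := (hχ _ (mem_union_right _ hedge)).1
          push_neg at hP
          rcases mem_union.mp hv with hv | hv
          · obtain ⟨y, hy, rfl⟩ := mem_image.mp hv
            exact hP y hy hvt
          · simp only [mem_insert, mem_singleton] at hv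
            rcases hv with rfl | rfl
            · rw [hjf] at hvt; exact absurd hvt (by simp)
            · rw [hjvf] at hvt; exact absurd hvt (by simp)
        · have hpi : ((e, i) : Finset ℕ × ℕ) ∈ E₀ ×ˢ range (2*h) :=
            mem_product.mpr ⟨he, hir⟩
          have hedge : e.image (· + 2*(2*h)) ∪ {i, i + 2*h} ∈ pairEdges (2*h) E₀ :=
            mem_image_of_mem _ hpi
          obtain ⟨v, hv, hvf⟩ := (hχ _ (mem_union_right _ hedge)).2
          push_neg at hQ
          rcases mem_union.mp hv with hv | hv
          · obtain ⟨y, hy, rfl⟩ := mem_image.mp hv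
            exact hQ y hy hvf
          · simp only [mem_insert, mem_singleton] at hv
            rcases hv with rfl | rfl
            · rw [hit] at hvf; exact absurd hvf (by simp)
            · rw [hivt] at hvf; exact absurd hvf (by simp)
      · push_neg at hBk
        have hB : ∀ i < 2*h, χ i = true ∨ χ (i + 2*h) = true := by
          intro i hi
          cases hci : χ i with
          | false =>
            have h2 := hBk i (mem_range.mpr hi) hci
            right
            simpa using h2
          | true => left; rfl
        obtain ⟨e, he, hm⟩ := mainlem hh1 χ hB
        exact hkE e he hm
    · push_neg at hA
      have hB' : ∀ i < 2*h, (!(χ i)) = true ∨ (!(χ (i + 2*h))) = true := by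
        intro i hi
        cases hci : χ i with
        | false => left; simp [hci]
        | true =>
          right
          have h2 := hA i (mem_range.mpr hi) hci
          rw [Bool.eq_false_iff.mpr h2]
          rfl
      obtain ⟨e, he, hm⟩ := mainlem hh1 (fun x => !(χ x)) hB'
      apply hkE e he
      rcases hm with hm | hm
      · right; intro x hx; have := hm x hx; simpa using this
      · left; intro x hx; have := hm x hx; simpa using this
  have hmle : m (2*h) ≤ Etot.card := Nat.sInf_le ⟨Etot, huni, hncol, rfl⟩
  have hc1 : (kEdges (2*h)).card ≤ 2^(2*h-1) + (2*h-1).choose (h-1) := by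
    calc (kEdges (2*h)).card
        ≤ ((range (2*h)).powerset.filter (fun K => K.card ≤ (2*h)/2)).card := card_image_le
      _ = ∑ k ∈ range ((2*h)/2+1), (2*h).choose k := filter_card_eq (2*h)
      _ = ∑ k ∈ range (h+1), (2*h).choose k := by rw [show (2*h)/2 = h by omega]
      _ = 2^(2*h-1) + (2*h-1).choose (h-1) := sum_half h hh1
  have hc2 : (pairEdges (2*h) E₀).card ≤ m (2*h-2) * (2*h) := by
    calc (pairEdges (2*h) E₀).card ≤ (E₀ ×ˢ range (2*h)).card := card_image_le
      _ = E₀.card * (2*h) := by rw [card_product, card_range]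
      _ = m (2*h-2) * (2*h) := by rw [hE₀card]; rfl
  have hc3 : Etot.card ≤ (kEdges (2*h)).card + (pairEdges (2*h) E₀).card := card_union_le _ _
  have hd : (2*h).choose ((2*h)/2) / 2 = (2*h-1).choose (h-1) := by
    rw [show (2*h)/2 = h by omega, choose_half_even hh1]
    omega
  rw [hd, Nat.mul_comm (2*h) (m (2*h-2))]
  linarith
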